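/- Let $(\mathcal{S},\mathcal{L},\mathcal{P})$ be a labelled Markov chain, and let $\precsim$ denote the largest probabilistic simulation (the union of all probabilistic simulations) and $\backsim$ the largest probabilistic bisimulation. Then $\backsim \;=\; \precsim \cap \precsim^{op}$, i.e., two states are bisimilar if and only if each simulates the other. -/

import Mathlib

open scoped ENNReal

/-- Probability of jumping from `s` with label `l` into the set `X`. -/
noncomputable def pSet {S L : Type*} (P : S → L → S → ℝ≥0∞) (s : S) (l : L) (X : Set S) : ℝ≥0∞ :=
  ∑' x : X, P s l x

/-- Relational image `R(X) = {y | ∃ x ∈ X, x R y}`. -/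
def rimg {S : Type*} (R : S → S → Prop) (X : Set S) : Set S := {y | ∃ x ∈ X, R x y}

/-- `E` is an equivalence class of `R`. -/
def EqClass {S : Type*} (R : S → S → Prop) (E : Set S) : Prop := ∃ z, E = {y | R z y}

/-- A labelled Markov chain structure on a transition probability matrix. -/
structure IsLMC {S L : Type*} (P : S → L → S → ℝ≥0∞) : Prop where
  le_one : ∀ s l t, P s l t ≤ 1
  sum_le_one : ∀ s l, (∑' t, P s l t) ≤ 1

/-- A probabilistic simulation: a preorder `R` such that `s R t` implies
`P(s,l,X) ≤ P(t,l,R(X))`. -/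
def IsProbSim {S L : Type*} (P : S → L → S → ℝ≥0∞) (R : S → S → Prop) : Prop :=
  Reflexive R ∧ Transitive R ∧
    ∀ s t, R s t → ∀ (l : L) (X : Set S), pSet P s l X ≤ pSet P t l (rimg R X)

/-- A probabilistic bisimulation: an equivalence relation `R` such that `s R t` implies
`P(s,l,E) = P(t,l,E)` for every `R`-equivalence class `E`. -/
def IsProbBisim {S L : Type*} (P : S → L → S → ℝ≥0∞) (R : S → S → Prop) : Prop :=
  Equivalence R ∧
    ∀ s t, R s t → ∀ (l : L) (E : Set S), EqClass R E → pSet P s l E = pSet P t l E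

/-- Similarity: the union of all probabilistic simulations. -/
def ProbSimilar {S L : Type*} (P : S → L → S → ℝ≥0∞) (s t : S) : Prop :=
  ∃ R, IsProbSim P R ∧ R s t

/-- Bisimilarity: the union of all probabilistic bisimulations. -/
def Bisimilar {S L : Type*} (P : S → L → S → ℝ≥0∞) (s t : S) : Prop :=
  ∃ R, IsProbBisim P R ∧ R s t

/-! ### Auxiliary lemmas -/

lemma pSet_indicator {S L : Type*} (P : S → L → S → ℝ≥0∞) (s : S) (l : L) (X : Set S) :
    pSet P s l X = ∑' x, X.indicator (P s l) x := tsum_subtype X (P s l)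

lemma pSet_mono {S L : Type*} (P : S → L → S → ℝ≥0∞) (s : S) (l : L) {X Y : Set S}
    (h : X ⊆ Y) : pSet P s l X ≤ pSet P s l Y := by
  rw [pSet_indicator, pSet_indicator]
  exact ENNReal.tsum_le_tsum fun x =>
    Set.indicator_le_indicator_of_subset h (fun a => zero_le) x

lemma pSet_union {S L : Type*} (P : S → L → S → ℝ≥0∞) (s : S) (l : L) {A B : Set S}
    (h : Disjoint A B) : pSet P s l (A ∪ B) = pSet P s l A + pSet P s l B := by
  rw [pSet_indicator, pSet_indicator, pSet_indicator, ← ENNReal.tsum_add]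
  exact tsum_congr fun x => by rw [Set.indicator_union_of_disjoint h]

lemma pSet_le_one {S L : Type*} {P : S → L → S → ℝ≥0∞} (hP : IsLMC P) (s : S) (l : L)
    (X : Set S) : pSet P s l X ≤ 1 := by
  refine le_trans ?_ (hP.sum_le_one s l)
  rw [pSet_indicator]
  exact ENNReal.tsum_le_tsum fun x => Set.indicator_le_self X (P s l) x

lemma rimg_mono {S : Type*} {R R' : S → S → Prop} (h : ∀ a b, R a b → R' a b)
    (X : Set S) : rimg R X ⊆ rimg R' X := by
  rintro y ⟨x, hx, hxy⟩; exact ⟨x, hx, h _ _ hxy⟩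

/-- The transitive closure of a reflexive relation satisfying the simulation inequality is a
probabilistic simulation. -/
lemma transGen_isProbSim {S L : Type*} (P : S → L → S → ℝ≥0∞) {R : S → S → Prop}
    (hrefl : Reflexive R)
    (hcond : ∀ s t, R s t → ∀ (l : L) (X : Set S), pSet P s l X ≤ pSet P t l (rimg R X)) :
    IsProbSim P (Relation.TransGen R) := by
  refine ⟨fun x => Relation.TransGen.single (hrefl x),
    fun a b c h1 h2 => Relation.TransGen.trans h1 h2, ?_⟩
  intro s t h l X
  induction h with
  | single h =>
      exact (hcond _ _ h l X).trans
        (pSet_mono _ _ _ (rimg_mono (fun a b hab => Relation.TransGen.single hab) X))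
  | tail h1 h2 ih =>
      refine ih.trans ((hcond _ _ h2 l _).trans (pSet_mono _ _ _ ?_))
      rintro y ⟨x, ⟨x0, hx0, hx0x⟩, hxy⟩
      exact ⟨x0, hx0, hx0x.tail hxy⟩

lemma similar_isProbSim {S L : Type*} (P : S → L → S → ℝ≥0∞) :
    IsProbSim P (ProbSimilar P) := by
  have heq : IsProbSim P (Eq : S → S → Prop) := by
    refine ⟨fun x => rfl, fun a b c h1 h2 => h1.trans h2, ?_⟩
    intro s t hst l X
    subst hst
    refine le_of_eq (congrArg (pSet P s l) ?_)
    ext y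
    exact ⟨fun hy => ⟨y, hy, rfl⟩, fun ⟨x, hx, hxy⟩ => hxy ▸ hx⟩
  have hrefl : Reflexive (ProbSimilar P) := fun x => ⟨Eq, heq, rfl⟩
  have hcond : ∀ s t, ProbSimilar P s t → ∀ (l : L) (X : Set S),
      pSet P s l X ≤ pSet P t l (rimg (ProbSimilar P) X) := by
    rintro s t ⟨R, hR, hst⟩ l X
    exact (hR.2.2 s t hst l X).trans
      (pSet_mono _ _ _ (rimg_mono (fun a b hab => ⟨R, hR, hab⟩) X))
  have hTG := transGen_isProbSim P hrefl hcond
  exact ⟨hrefl, fun a b c h1 h2 =>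
    ⟨_, hTG, (Relation.TransGen.single h1).tail h2⟩, hcond⟩

/-- On a `Similar`-upward-closed set, a simulated state jumps with no larger probability. -/
lemma sim_closed_le {S L : Type*} (P : S → L → S → ℝ≥0∞) {s t : S}
    (h : ProbSimilar P s t) (l : L) {A : Set S}
    (hA : ∀ a b, a ∈ A → ProbSimilar P a b → b ∈ A) :
    pSet P s l A ≤ pSet P t l A := by
  refine ((similar_isProbSim P).2.2 s t h l A).trans (le_of_eq (congrArg (pSet P t l) ?_))
  ext y
  constructor
  · rintro ⟨x, hx, hxy⟩; exact hA x y hx hxy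
  · intro hy; exact ⟨y, hy, (similar_isProbSim P).1 y⟩

/-- A probabilistic bisimulation gives equal jump probabilities on `R`-closed sets. -/
lemma bisim_closed {S L : Type*} {P : S → L → S → ℝ≥0∞} {R : S → S → Prop}
    (hR : IsProbBisim P R) {s t : S} (hst : R s t) (l : L) {A : Set S}
    (hA : ∀ a b, a ∈ A → R a b → b ∈ A) :
    pSet P s l A = pSet P t l A := by
  obtain ⟨heq, hcond⟩ := hR
  have key : ∀ u : S, pSet P u l A =
      ∑' (q : Quot R), ∑' (x : {x : S // Quot.mk R x = q}), A.indicator (P u l) x := by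
    intro u
    rw [pSet_indicator, ← (Equiv.sigmaFiberEquiv (Quot.mk R)).tsum_eq
      (fun x => A.indicator (P u l) x), ENNReal.tsum_sigma']
    exact tsum_congr fun q => tsum_congr fun x => rfl
  rw [key s, key t]
  refine tsum_congr fun q => ?_
  have hmem : ∀ x : S, Quot.mk R x = q ↔ R q.out x := by
    intro x
    constructor
    · intro h
      have : Quot.mk R x = Quot.mk R q.out := by rw [h, Quot.out_eq]
      exact heq.symm ((Equivalence.eqvGen_iff heq).1 (Quot.eq.1 this))
    · intro h
      rw [Quot.sound (heq.symm h), Quot.out_eq]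
  by_cases hq : q.out ∈ A
  · have hsub : ∀ x : {x : S // Quot.mk R x = q}, (x : S) ∈ A :=
      fun x => hA _ _ hq ((hmem x).1 x.2)
    have hE : pSet P s l {y | R q.out y} = pSet P t l {y | R q.out y} :=
      hcond s t hst l _ ⟨q.out, rfl⟩
    have conv : ∀ u : S, (∑' (x : {x : S // Quot.mk R x = q}), A.indicator (P u l) x)
        = pSet P u l {y | R q.out y} := by
      intro u
      rw [show (∑' (x : {x : S // Quot.mk R x = q}), A.indicator (P u l) x)
          = ∑' (x : {x : S // Quot.mk R x = q}), P u l x from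
        tsum_congr fun x => Set.indicator_of_mem (hsub x) _]
      exact ((Equiv.subtypeEquivRight hmem).tsum_eq (fun y : {y // y ∈ {y | R q.out y}} =>
        P u l y)).symm ▸ rfl
    rw [conv s, conv t, hE]
  · have hzero : ∀ (u : S) (x : {x : S // Quot.mk R x = q}),
        A.indicator (P u l) x = 0 := by
      intro u x
      refine Set.indicator_of_notMem (fun hx => hq ?_) _
      exact hA _ _ hx (heq.symm ((hmem x).1 x.2))
    rw [tsum_congr (hzero s), tsum_congr (hzero t)]

/-- on a labelled Markov chain, bisimilarity (the largest probabilistic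
bisimulation) coincides with mutual similarity: `∼ = ≾ ∩ ≾ᵒᵖ`. -/
theorem stmt3 {S L : Type*} [Countable S] (P : S → L → S → ℝ≥0∞) (hP : IsLMC P)
    (s t : S) :
    Bisimilar P s t ↔ ProbSimilar P s t ∧ ProbSimilar P t s := by
  constructor
  · rintro ⟨R, hR, hst⟩
    have hsim : IsProbSim P R := by
      refine ⟨hR.1.refl, fun a b c h1 h2 => hR.1.trans h1 h2, ?_⟩
      intro a b hab l X
      have h1 : pSet P a l X ≤ pSet P a l (rimg R X) :=
        pSet_mono _ _ _ (fun y hy => ⟨y, hy, hR.1.refl y⟩)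
      have h2 : pSet P a l (rimg R X) = pSet P b l (rimg R X) := by
        refine bisim_closed hR hab l ?_
        rintro x y ⟨x0, hx0, hx0x⟩ hxy
        exact ⟨x0, hx0, hR.1.trans hx0x hxy⟩
      exact h1.trans_eq h2
    exact ⟨⟨R, hsim, hst⟩, ⟨R, hsim, hR.1.symm hst⟩⟩
  · rintro ⟨hst, hts⟩
    refine ⟨fun x y => ProbSimilar P x y ∧ ProbSimilar P y x, ⟨?_, ?_⟩, hst, hts⟩
    · exact ⟨fun x => ⟨(similar_isProbSim P).1 x, (similar_isProbSim P).1 x⟩,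
        fun h => ⟨h.2, h.1⟩,
        fun h1 h2 => ⟨(similar_isProbSim P).2.1 h1.1 h2.1,
          (similar_isProbSim P).2.1 h2.2 h1.2⟩⟩
    · rintro a b ⟨hab, hba⟩ l E ⟨z, rfl⟩
      set U : Set S := {y | ProbSimilar P z y} with hU
      set D : Set S := {y | ProbSimilar P z y ∧ ¬ ProbSimilar P y z} with hD
      have hUclosed : ∀ x y, x ∈ U → ProbSimilar P x y → y ∈ U :=
        fun x y hx hxy => (similar_isProbSim P).2.1 hx hxy
      have hDclosed : ∀ x y, x ∈ D → ProbSimilar P x y → y ∈ D := by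
        rintro x y ⟨hzx, hnx⟩ hxy
        exact ⟨(similar_isProbSim P).2.1 hzx hxy,
          fun hyz => hnx ((similar_isProbSim P).2.1 hxy hyz)⟩
      have hUeq : pSet P a l U = pSet P b l U :=
        le_antisymm (sim_closed_le P hab l hUclosed) (sim_closed_le P hba l hUclosed)
      have hDeq : pSet P a l D = pSet P b l D :=
        le_antisymm (sim_closed_le P hab l hDclosed) (sim_closed_le P hba l hDclosed)
      have hsplit : ∀ u : S, pSet P u l U =
          pSet P u l {y | ProbSimilar P z y ∧ ProbSimilar P y z} + pSet P u l D := by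
        intro u
        rw [← pSet_union P u l]
        · congr 1
          ext y
          constructor
          · intro hy
            by_cases hyz : ProbSimilar P y z
            · exact Or.inl ⟨hy, hyz⟩
            · exact Or.inr ⟨hy, hyz⟩
          · rintro (⟨hy, _⟩ | ⟨hy, _⟩) <;> exact hy
        · rw [Set.disjoint_left]
          rintro y ⟨_, hyz⟩ ⟨_, hnyz⟩
          exact hnyz hyz
      have hfin : pSet P b l D ≠ ⊤ :=
        fun h => by simpa [h] using pSet_le_one hP b l D
      have := hsplit a
      rw [hUeq, hsplit b, hDeq] at this
      exact WithTop.add_right_cancel hfin this.symm
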